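/- The function $g(\rho^{-1}, \eta, F, Y, \psi) = -p\log(\rho^{-1}) + q\eta - r\log(\psi) + s\,\operatorname{tr}(F Y^{-1/2} F^\top)$ with constants $p,q,r,s>0$ is convex on $(0,\infty)\times\mathbb{R}\times\mathbb{R}^{3\times3}\times\mathcal{S}^3_{>0}\times(0,\infty)$, and hence $C\exp(g)$ is convex for any constant $C>0$. -/

import Mathlib

open Matrix Set Real

open scoped Classical in
/-- The inverse of the unique symmetric positive-semidefinite square root of `Y`
(junk value `0` when `Y` is not positive semidefinite). -/
noncomputable def invSqrt (Y : Matrix (Fin 3) (Fin 3) ℝ) : Matrix (Fin 3) (Fin 3) ℝ :=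
  if h : Y.PosSemidef then
    (h.1.eigenvectorUnitary.1 * diagonal ((↑) ∘ (√·) ∘ h.1.eigenvalues) *
      (star h.1.eigenvectorUnitary : Matrix (Fin 3) (Fin 3) ℝ))⁻¹ else 0

section Aux
set_option linter.unusedSectionVars false

variable {n : Type*} [Fintype n] [DecidableEq n]

/-- The symmetric positive-semidefinite square root (as in the old Mathlib). -/
noncomputable def Matrix.PosSemidef.sqrt {A : Matrix n n ℝ} (hA : A.PosSemidef) :
    Matrix n n ℝ :=
  hA.1.eigenvectorUnitary.1 * diagonal ((↑) ∘ (√·) ∘ hA.1.eigenvalues) *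
    (star hA.1.eigenvectorUnitary : Matrix n n ℝ)

theorem Matrix.PosSemidef.posSemidef_sqrt {A : Matrix n n ℝ} (hA : A.PosSemidef) :
    hA.sqrt.PosSemidef := by
  unfold Matrix.PosSemidef.sqrt
  have hd := PosSemidef.diagonal (n := n)
    (d := ((↑) ∘ (√·) ∘ hA.1.eigenvalues : n → ℝ)) (fun i => by simp [Real.sqrt_nonneg])
  have := hd.mul_mul_conjTranspose_same (hA.1.eigenvectorUnitary : Matrix n n ℝ)
  simpa [star_eq_conjTranspose] using this

theorem Matrix.PosSemidef.sqrt_mul_self {A : Matrix n n ℝ} (hA : A.PosSemidef) :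
    hA.sqrt * hA.sqrt = A := by
  unfold Matrix.PosSemidef.sqrt
  have hUU : (star hA.1.eigenvectorUnitary : Matrix n n ℝ) * hA.1.eigenvectorUnitary = 1 := by
    simp
  have hD : diagonal (((↑) ∘ (√·) ∘ hA.1.eigenvalues : n → ℝ)) *
      diagonal (((↑) ∘ (√·) ∘ hA.1.eigenvalues : n → ℝ))
      = diagonal (RCLike.ofReal ∘ hA.1.eigenvalues) := by
    rw [diagonal_mul_diagonal]
    congr 1
    ext i
    simp [Real.mul_self_sqrt (hA.eigenvalues_nonneg i)]
  conv_rhs => rw [hA.1.spectral_theorem]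
  rw [Unitary.conjStarAlgAut_apply, ← hD]
  simp only [mul_assoc, Unitary.coe_star]
  rw [← mul_assoc (star hA.1.eigenvectorUnitary : Matrix n n ℝ) (hA.1.eigenvectorUnitary : Matrix n n ℝ), hUU, one_mul]

private lemma herm_eq_transpose {A : Matrix n n ℝ} (hA : A.IsHermitian) : Aᵀ = A := by
  rw [← conjTranspose_eq_transpose_of_trivial]; exact hA

private lemma herm_smul {A : Matrix n n ℝ} (hA : A.IsHermitian) (c : ℝ) :
    (c • A).IsHermitian := by
  unfold Matrix.IsHermitian at *
  rw [conjTranspose_smul, hA, star_trivial]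

private lemma psd_smul {A : Matrix n n ℝ} (hA : A.PosSemidef) {c : ℝ} (hc : 0 ≤ c) :
    (c • A).PosSemidef := by
  refine PosSemidef.of_dotProduct_mulVec_nonneg (herm_smul hA.1 c) fun x => ?_
  rw [smul_mulVec, dotProduct_smul, smul_eq_mul]
  exact mul_nonneg hc (hA.dotProduct_mulVec_nonneg x)

private lemma psd_trace_nonneg {A : Matrix n n ℝ} (hA : A.PosSemidef) : 0 ≤ A.trace := by
  rw [Matrix.trace]
  refine Finset.sum_nonneg fun i _ => ?_
  have := hA.dotProduct_mulVec_nonneg (Pi.single i 1)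
  simpa [dotProduct, Pi.single_apply, Matrix.mulVec, Finset.sum_ite_eq] using this

private lemma dot_symm {A : Matrix n n ℝ} (hA : A.IsHermitian) (x y : n → ℝ) :
    x ⬝ᵥ (A *ᵥ y) = (A *ᵥ x) ⬝ᵥ y := by
  rw [dotProduct_mulVec, ← mulVec_transpose, herm_eq_transpose hA]

private lemma trace_quad_mono (F : Matrix n n ℝ) {M N : Matrix n n ℝ}
    (h : (N - M).PosSemidef) : (F * M * Fᵀ).trace ≤ (F * N * Fᵀ).trace := by
  have h1 : (F * (N - M) * Fᴴ).PosSemidef := h.mul_mul_conjTranspose_same F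
  rw [conjTranspose_eq_transpose_of_trivial] at h1
  have h2 := psd_trace_nonneg h1
  have h3 : F * (N - M) * Fᵀ = F * N * Fᵀ - F * M * Fᵀ := by rw [mul_sub, sub_mul]
  rw [h3, trace_sub] at h2
  linarith

private lemma posDef_of_sq {S : Matrix n n ℝ} (hS : S.PosSemidef) (h : (S * S).PosDef) :
    S.PosDef := by
  refine PosDef.of_dotProduct_mulVec_pos hS.1 fun x hx => ?_
  rcases (hS.dotProduct_mulVec_nonneg x).lt_or_eq with hlt | heq
  · simpa using hlt
  · exfalso
    have h0 : S *ᵥ x = 0 := (hS.dotProduct_mulVec_zero_iff x).mp (by simpa using heq.symm)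
    have := h.dotProduct_mulVec_pos hx
    rw [← mulVec_mulVec, h0, mulVec_zero, dotProduct_zero] at this
    exact lt_irrefl 0 this

private lemma posDef_comb {A B : Matrix n n ℝ} (hA : A.PosDef) (hB : B.PosDef)
    {a b : ℝ} (ha : 0 ≤ a) (hb : 0 ≤ b) (hab : a + b = 1) :
    (a • A + b • B).PosDef := by
  rcases ha.lt_or_eq with ha' | rfl
  · have h1 : (a • A).PosDef := by
      refine PosDef.of_dotProduct_mulVec_pos (herm_smul hA.1 a) fun x hx => ?_
      rw [smul_mulVec, dotProduct_smul, smul_eq_mul]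
      exact mul_pos ha' (hA.dotProduct_mulVec_pos hx)
    exact h1.add_posSemidef (psd_smul hB.posSemidef hb)
  · have : b = 1 := by linarith
    subst this; simpa using hB

private lemma inv_antitone' {A B : Matrix n n ℝ} (hA : A.PosDef) (hB : B.PosDef)
    (hAB : (A - B).PosSemidef) (x : n → ℝ) :
    x ⬝ᵥ (A⁻¹ *ᵥ x) ≤ x ⬝ᵥ (B⁻¹ *ᵥ x) := by
  have hAd : IsUnit A.det := hA.det_pos.ne'.isUnit
  have hBd : IsUnit B.det := hB.det_pos.ne'.isUnit
  set u := A⁻¹ *ᵥ x with hu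
  have hAu : A *ᵥ u = x := by
    rw [hu, mulVec_mulVec, mul_nonsing_inv _ hAd, one_mulVec]
  have hBB : B *ᵥ (B⁻¹ *ᵥ x) = x := by
    rw [mulVec_mulVec, mul_nonsing_inv _ hBd, one_mulVec]
  have e1 : x ⬝ᵥ (A⁻¹ *ᵥ x) = u ⬝ᵥ (A *ᵥ u) := by
    rw [hAu, ← hu, dotProduct_comm]
  have key := hB.posSemidef.dotProduct_mulVec_nonneg (B⁻¹ *ᵥ x - u)
  rw [star_trivial, mulVec_sub, hBB, dotProduct_sub, sub_dotProduct, sub_dotProduct] at key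
  have e2 : (B⁻¹ *ᵥ x) ⬝ᵥ (B *ᵥ u) = x ⬝ᵥ u := by
    rw [dot_symm hB.isHermitian, hBB]
  have e3 : (B⁻¹ *ᵥ x) ⬝ᵥ x = x ⬝ᵥ (B⁻¹ *ᵥ x) := dotProduct_comm _ _
  have e4 : u ⬝ᵥ x = x ⬝ᵥ u := dotProduct_comm _ _
  have e5 : x ⬝ᵥ u = u ⬝ᵥ (A *ᵥ u) := by
    rw [← hAu, dot_symm hA.isHermitian]
  have e6 := hAB.dotProduct_mulVec_nonneg u
  rw [star_trivial, sub_mulVec, dotProduct_sub] at e6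
  rw [e2, e3, e4, e5] at key
  linarith [e1, e6, key]

private lemma inv_antitone {A B : Matrix n n ℝ} (hB : B.PosDef) (hAB : (A - B).PosSemidef) :
    (B⁻¹ - A⁻¹).PosSemidef := by
  have hA : A.PosDef := by have := hB.add_posSemidef hAB; simpa using this
  refine PosSemidef.of_dotProduct_mulVec_nonneg (hB.inv.isHermitian.sub hA.inv.isHermitian) fun x => ?_
  rw [star_trivial, sub_mulVec, dotProduct_sub, sub_nonneg]
  exact inv_antitone' hA hB hAB x

/-- If `C, D ⪰ 0` and `C² ⪰ D²`, then `C ⪰ D` (operator monotonicity of the square root). -/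
private lemma sub_psd_of_sq_sub_psd {C D : Matrix n n ℝ} (hC : C.PosSemidef)
    (hD : D.PosSemidef) (h : (C * C - D * D).PosSemidef) : (C - D).PosSemidef := by
  have hM : (C - D).IsHermitian := hC.isHermitian.sub hD.isHermitian
  refine hM.posSemidef_iff_eigenvalues_nonneg.mpr fun i => ?_
  show (0:ℝ) ≤ hM.eigenvalues i
  by_contra hneg
  push_neg at hneg
  set μ := hM.eigenvalues i with hμ
  set x : n → ℝ := ⇑(hM.eigenvectorBasis i) with hx
  have hx0 : x ≠ 0 := by
    have := hM.eigenvectorBasis.orthonormal.ne_zero i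
    intro hcon
    apply this
    ext j
    exact congrFun hcon j
  have hMx : (C - D) *ᵥ x = μ • x := hM.mulVec_eigenvectorBasis i
  have hkey := h.dotProduct_mulVec_nonneg x
  rw [star_trivial] at hkey
  have hsplit : C * C - D * D = C * (C - D) + (C - D) * D := by noncomm_ring
  rw [hsplit, add_mulVec, dotProduct_add, ← mulVec_mulVec, ← mulVec_mulVec, hMx] at hkey
  have e1 : x ⬝ᵥ (C *ᵥ (μ • x)) = μ * (x ⬝ᵥ (C *ᵥ x)) := by
    rw [mulVec_smul, dotProduct_smul, smul_eq_mul]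
  have e2 : x ⬝ᵥ ((C - D) *ᵥ (D *ᵥ x)) = μ * (x ⬝ᵥ (D *ᵥ x)) := by
    rw [dot_symm hM, hMx, smul_dotProduct, smul_eq_mul]
  rw [e1, e2] at hkey
  have hC0 : x ⬝ᵥ (C *ᵥ x) = 0 ∧ x ⬝ᵥ (D *ᵥ x) = 0 := by
    have h1 := hC.dotProduct_mulVec_nonneg x; have h2 := hD.dotProduct_mulVec_nonneg x
    rw [star_trivial] at h1 h2
    constructor <;> nlinarith
  have hCx : C *ᵥ x = 0 := (hC.dotProduct_mulVec_zero_iff x).mp (by simpa using hC0.1)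
  have hDx : D *ᵥ x = 0 := (hD.dotProduct_mulVec_zero_iff x).mp (by simpa using hC0.2)
  have : μ • x = 0 := by rw [← hMx, sub_mulVec, hCx, hDx, sub_zero]
  rcases smul_eq_zero.mp this with h' | h'
  · exact absurd h' (by linarith)
  · exact hx0 h'

private lemma herm_sq_psd {M : Matrix n n ℝ} (hM : M.IsHermitian) : (M * M).PosSemidef := by
  have := posSemidef_conjTranspose_mul_self M
  rwa [hM.eq] at this

/-- Concavity of the matrix square root. -/
private lemma sqrt_comb_psd {Y₁ Y₂ : Matrix n n ℝ} (h₁ : Y₁.PosSemidef) (h₂ : Y₂.PosSemidef)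
    {a b : ℝ} (ha : 0 ≤ a) (hb : 0 ≤ b) (hab : a + b = 1)
    (hc : (a • Y₁ + b • Y₂).PosSemidef) :
    (hc.sqrt - (a • h₁.sqrt + b • h₂.sqrt)).PosSemidef := by
  set S₁ := h₁.sqrt with hS₁
  set S₂ := h₂.sqrt with hS₂
  set C := hc.sqrt with hC
  set D := a • S₁ + b • S₂ with hD
  have hS₁psd := h₁.posSemidef_sqrt
  have hS₂psd := h₂.posSemidef_sqrt
  have hCpsd := hc.posSemidef_sqrt
  have hDpsd : D.PosSemidef := (psd_smul hS₁psd ha).add (psd_smul hS₂psd hb)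
  refine sub_psd_of_sq_sub_psd hCpsd hDpsd ?_
  have hCsq : C * C = a • Y₁ + b • Y₂ := hc.sqrt_mul_self
  have hY₁ : S₁ * S₁ = Y₁ := h₁.sqrt_mul_self
  have hY₂ : S₂ * S₂ = Y₂ := h₂.sqrt_mul_self
  have key : C * C - D * D = (a * b) • ((S₁ - S₂) * (S₁ - S₂)) := by
    rw [hCsq, hD, ← hY₁, ← hY₂]
    have hb' : b = 1 - a := by linarith
    subst hb'
    simp only [add_mul, mul_add, smul_mul_assoc, mul_smul_comm, sub_mul, mul_sub, smul_smul]
    module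
  rw [key]
  exact psd_smul (herm_sq_psd (hS₁psd.isHermitian.sub hS₂psd.isHermitian)) (mul_nonneg ha hb)

/-- Expansion identity for the matrix fractional function. -/
private lemma expand_quad {A : Matrix n n ℝ} (hA : A.PosDef) (F X : Matrix n n ℝ) :
    (F - X * A) * A⁻¹ * (F - X * A)ᵀ
      = F * A⁻¹ * Fᵀ - F * Xᵀ - X * Fᵀ + X * A * Xᵀ := by
  have hAd : IsUnit A.det := hA.det_pos.ne'.isUnit
  have h1 : A * A⁻¹ = 1 := mul_nonsing_inv _ hAd
  have h2 : A⁻¹ * A = 1 := nonsing_inv_mul _ hAd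
  have hAt : Aᵀ = A := herm_eq_transpose hA.isHermitian
  have key : (F - X * A) * A⁻¹ = F * A⁻¹ - X := by
    rw [sub_mul, mul_assoc, h1, mul_one]
  rw [key, transpose_sub, transpose_mul, hAt, mul_sub, sub_mul, sub_mul]
  have e1 : F * A⁻¹ * (A * Xᵀ) = F * Xᵀ := by
    rw [mul_assoc, ← mul_assoc A⁻¹, h2, one_mul]
  have e3 : X * (A * Xᵀ) = X * A * Xᵀ := by rw [mul_assoc]
  rw [e1, e3]
  abel

private lemma trace_mul_comb (F₁ F₂ X : Matrix n n ℝ) (a b : ℝ) :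
    ((a • F₁ + b • F₂) * X).trace = a * (F₁ * X).trace + b * (F₂ * X).trace := by
  rw [add_mul, smul_mul_assoc, smul_mul_assoc, trace_add, trace_smul, trace_smul]
  simp

/-- Joint convexity of the matrix fractional function (trace form). -/
private lemma matrix_fractional {A₁ A₂ : Matrix n n ℝ} (hA₁ : A₁.PosDef) (hA₂ : A₂.PosDef)
    (F₁ F₂ : Matrix n n ℝ) {a b : ℝ} (ha : 0 ≤ a) (hb : 0 ≤ b) (hab : a + b = 1) :
    ((a • F₁ + b • F₂) * (a • A₁ + b • A₂)⁻¹ * (a • F₁ + b • F₂)ᵀ).trace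
      ≤ a * (F₁ * A₁⁻¹ * F₁ᵀ).trace + b * (F₂ * A₂⁻¹ * F₂ᵀ).trace := by
  set Ab := a • A₁ + b • A₂ with hAb
  have hAbpd : Ab.PosDef := posDef_comb hA₁ hA₂ ha hb hab
  set Fb := a • F₁ + b • F₂ with hFb
  set X := Fb * Ab⁻¹ with hX
  have hGt : Ab⁻¹ᵀ = Ab⁻¹ := herm_eq_transpose hAbpd.inv.isHermitian
  have hAbd : IsUnit Ab.det := hAbpd.det_pos.ne'.isUnit
  have h1 : Ab⁻¹ * Ab = 1 := nonsing_inv_mul _ hAbd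
  have hpsd : ∀ (A : Matrix n n ℝ) (hA : A.PosDef) (F : Matrix n n ℝ),
      0 ≤ (F * A⁻¹ * Fᵀ - F * Xᵀ - X * Fᵀ + X * A * Xᵀ).trace := by
    intro A hA F
    rw [← expand_quad hA F X]
    have := hA.inv.posSemidef.mul_mul_conjTranspose_same (F - X * A)
    rw [conjTranspose_eq_transpose_of_trivial] at this
    exact psd_trace_nonneg this
  have k₁ := hpsd A₁ hA₁ F₁
  have k₂ := hpsd A₂ hA₂ F₂
  have comb : a * (F₁ * A₁⁻¹ * F₁ᵀ).trace + b * (F₂ * A₂⁻¹ * F₂ᵀ).trace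
      - (Fb * Xᵀ).trace - (X * Fbᵀ).trace + (X * Ab * Xᵀ).trace ≥ 0 := by
    have e₁ : (Fb * Xᵀ).trace = a * (F₁ * Xᵀ).trace + b * (F₂ * Xᵀ).trace :=
      trace_mul_comb F₁ F₂ Xᵀ a b
    have e₂ : (X * Fbᵀ).trace = a * (X * F₁ᵀ).trace + b * (X * F₂ᵀ).trace := by
      rw [hFb, transpose_add, transpose_smul, transpose_smul, mul_add,
        Matrix.mul_smul, Matrix.mul_smul, trace_add, trace_smul, trace_smul]
      simp
    have e₃ : (X * Ab * Xᵀ).trace = a * (X * A₁ * Xᵀ).trace + b * (X * A₂ * Xᵀ).trace := by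
      rw [hAb, mul_add, Matrix.mul_smul, Matrix.mul_smul, add_mul, Matrix.smul_mul,
        Matrix.smul_mul, trace_add, trace_smul, trace_smul]
      simp
    rw [e₁, e₂, e₃]
    simp only [trace_add, trace_sub] at k₁ k₂
    nlinarith
  have hXAb : X * Ab = Fb := by rw [hX, mul_assoc, h1, mul_one]
  have hXt : Xᵀ = Ab⁻¹ * Fbᵀ := by rw [hX, transpose_mul, hGt]
  have idXAX : X * Ab * Xᵀ = Fb * Ab⁻¹ * Fbᵀ := by rw [hXAb, hXt, ← mul_assoc]
  have idFX : Fb * Xᵀ = Fb * Ab⁻¹ * Fbᵀ := by rw [hXt, ← mul_assoc]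
  have idXF : X * Fbᵀ = Fb * Ab⁻¹ * Fbᵀ := rfl
  rw [idXAX, idFX, idXF] at comb
  linarith

end Aux

private lemma pd_sqrt {Y : Matrix (Fin 3) (Fin 3) ℝ} (hY : Y.PosDef) :
    hY.posSemidef.sqrt.PosDef := by
  refine posDef_of_sq hY.posSemidef.posSemidef_sqrt ?_
  rw [hY.posSemidef.sqrt_mul_self]
  exact hY

private lemma invSqrt_eq {Y : Matrix (Fin 3) (Fin 3) ℝ} (hY : Y.PosDef) :
    invSqrt Y = hY.posSemidef.sqrt⁻¹ := by rw [invSqrt, dif_pos hY.posSemidef]; rfl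

/-- The key convexity inequality for the trace term. -/
private lemma key_trace {Y₁ Y₂ F₁ F₂ : Matrix (Fin 3) (Fin 3) ℝ}
    (hY₁ : Y₁.PosDef) (hY₂ : Y₂.PosDef) {a b : ℝ} (ha : 0 ≤ a) (hb : 0 ≤ b)
    (hab : a + b = 1) :
    ((a • F₁ + b • F₂) * invSqrt (a • Y₁ + b • Y₂) * (a • F₁ + b • F₂)ᵀ).trace
      ≤ a * (F₁ * invSqrt Y₁ * F₁ᵀ).trace + b * (F₂ * invSqrt Y₂ * F₂ᵀ).trace := by
  have hYb : (a • Y₁ + b • Y₂).PosDef := posDef_comb hY₁ hY₂ ha hb hab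
  set S₁ := hY₁.posSemidef.sqrt with hS₁
  set S₂ := hY₂.posSemidef.sqrt with hS₂
  set Sb := hYb.posSemidef.sqrt with hSb
  have hS₁pd : S₁.PosDef := pd_sqrt hY₁
  have hS₂pd : S₂.PosDef := pd_sqrt hY₂
  have hSbpd : Sb.PosDef := pd_sqrt hYb
  have hDpd : (a • S₁ + b • S₂).PosDef := posDef_comb hS₁pd hS₂pd ha hb hab
  have h1 : (Sb - (a • S₁ + b • S₂)).PosSemidef :=
    sqrt_comb_psd hY₁.posSemidef hY₂.posSemidef ha hb hab hYb.posSemidef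
  have h2 : ((a • S₁ + b • S₂)⁻¹ - Sb⁻¹).PosSemidef := inv_antitone hDpd h1
  have step2 := trace_quad_mono (a • F₁ + b • F₂) h2
  have step1 := matrix_fractional hS₁pd hS₂pd F₁ F₂ ha hb hab
  rw [invSqrt_eq hYb, invSqrt_eq hY₁, invSqrt_eq hY₂]
  exact le_trans step2 step1

/-- For constants `p, q, r, s > 0`, the function
`g(v, η, F, Y, ψ) = -p log v + q η - r log ψ + s tr(F Y^{-1/2} Fᵀ)`
(here `v = ρ⁻¹`) is convex on `(0,∞) × ℝ × ℝ^{3×3} × 𝒮³₊ × (0,∞)`,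
and hence `C exp(g)` is convex there for any constant `C > 0`. -/
theorem stmt12 (p q r s : ℝ) (hp : 0 < p) (hq : 0 < q) (hr : 0 < r) (hs : 0 < s) :
    ConvexOn ℝ
      {P : ℝ × ℝ × Matrix (Fin 3) (Fin 3) ℝ × Matrix (Fin 3) (Fin 3) ℝ × ℝ |
        0 < P.1 ∧ P.2.2.2.1.PosDef ∧ 0 < P.2.2.2.2}
      (fun P => -p * Real.log P.1 + q * P.2.1 - r * Real.log P.2.2.2.2
        + s * (P.2.2.1 * invSqrt P.2.2.2.1 * P.2.2.1ᵀ).trace) ∧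
    ∀ C : ℝ, 0 < C →
      ConvexOn ℝ
        {P : ℝ × ℝ × Matrix (Fin 3) (Fin 3) ℝ × Matrix (Fin 3) (Fin 3) ℝ × ℝ |
          0 < P.1 ∧ P.2.2.2.1.PosDef ∧ 0 < P.2.2.2.2}
        (fun P => C * Real.exp (-p * Real.log P.1 + q * P.2.1 - r * Real.log P.2.2.2.2
          + s * (P.2.2.1 * invSqrt P.2.2.2.1 * P.2.2.1ᵀ).trace)) := by
  set S : Set (ℝ × ℝ × Matrix (Fin 3) (Fin 3) ℝ × Matrix (Fin 3) (Fin 3) ℝ × ℝ) :=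
    {P | 0 < P.1 ∧ P.2.2.2.1.PosDef ∧ 0 < P.2.2.2.2} with hSdef
  have hSconv : Convex ℝ S := by
    intro x hx y hy a b ha hb hab
    refine ⟨?_, ?_, ?_⟩
    · show 0 < a * x.1 + b * y.1
      have := (convex_Ioi (0:ℝ)) hx.1 hy.1 ha hb hab
      simpa using this
    · show ((a • x + b • y).2.2.2.1).PosDef
      have : (a • x + b • y).2.2.2.1 = a • x.2.2.2.1 + b • y.2.2.2.1 := rfl
      rw [this]
      exact posDef_comb hx.2.1 hy.2.1 ha hb hab
    · show 0 < a * x.2.2.2.2 + b * y.2.2.2.2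
      have := (convex_Ioi (0:ℝ)) hx.2.2 hy.2.2 ha hb hab
      simpa using this
  have hmain : ConvexOn ℝ S
      (fun P => -p * Real.log P.1 + q * P.2.1 - r * Real.log P.2.2.2.2
        + s * (P.2.2.1 * invSqrt P.2.2.2.1 * P.2.2.1ᵀ).trace) := by
    refine ⟨hSconv, ?_⟩
    intro x hx y hy a b ha hb hab
    obtain ⟨hv₁, hY₁, hψ₁⟩ := hx
    obtain ⟨hv₂, hY₂, hψ₂⟩ := hy
    have hcomp1 : (a • x + b • y).1 = a * x.1 + b * y.1 := rfl
    have hcomp2 : (a • x + b • y).2.1 = a * x.2.1 + b * y.2.1 := rfl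
    have hcomp3 : (a • x + b • y).2.2.1 = a • x.2.2.1 + b • y.2.2.1 := rfl
    have hcomp4 : (a • x + b • y).2.2.2.1 = a • x.2.2.2.1 + b • y.2.2.2.1 := rfl
    have hcomp5 : (a • x + b • y).2.2.2.2 = a * x.2.2.2.2 + b * y.2.2.2.2 := rfl
    simp only [hcomp1, hcomp2, hcomp3, hcomp4, hcomp5, smul_eq_mul]
    -- log terms
    have hlogv : a * Real.log x.1 + b * Real.log y.1
        ≤ Real.log (a * x.1 + b * y.1) := by
      have := strictConcaveOn_log_Ioi.concaveOn.2 hv₁ hv₂ ha hb hab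
      simpa using this
    have hlogψ : a * Real.log x.2.2.2.2 + b * Real.log y.2.2.2.2
        ≤ Real.log (a * x.2.2.2.2 + b * y.2.2.2.2) := by
      have := strictConcaveOn_log_Ioi.concaveOn.2 hψ₁ hψ₂ ha hb hab
      simpa using this
    have htr := key_trace hY₁ hY₂ ha hb hab (F₁ := x.2.2.1) (F₂ := y.2.2.1)
    nlinarith [htr, hlogv, hlogψ, hp.le, hr.le, hs.le,
      mul_le_mul_of_nonneg_left hlogv hp.le,
      mul_le_mul_of_nonneg_left hlogψ hr.le,
      mul_le_mul_of_nonneg_left htr hs.le]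
  refine ⟨hmain, fun C hC => ⟨hSconv, ?_⟩⟩
  intro x hx y hy a b ha hb hab
  have hg := hmain.2 hx hy ha hb hab
  simp only [smul_eq_mul] at hg ⊢
  set gx := -p * Real.log x.1 + q * x.2.1 - r * Real.log x.2.2.2.2
      + s * (x.2.2.1 * invSqrt x.2.2.2.1 * x.2.2.1ᵀ).trace with hgx
  set gy := -p * Real.log y.1 + q * y.2.1 - r * Real.log y.2.2.2.2
      + s * (y.2.2.1 * invSqrt y.2.2.2.1 * y.2.2.1ᵀ).trace with hgy
  have hexp1 : Real.exp (-p * Real.log (a • x + b • y).1 + q * (a • x + b • y).2.1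
      - r * Real.log (a • x + b • y).2.2.2.2
      + s * ((a • x + b • y).2.2.1 * invSqrt (a • x + b • y).2.2.2.1
        * (a • x + b • y).2.2.1ᵀ).trace)
      ≤ Real.exp (a * gx + b * gy) := Real.exp_le_exp.2 hg
  have hexp2 : Real.exp (a * gx + b * gy) ≤ a * Real.exp gx + b * Real.exp gy := by
    have := convexOn_exp.2 (Set.mem_univ gx) (Set.mem_univ gy) ha hb hab
    simpa using this
  have h3 := le_trans hexp1 hexp2
  calc C * Real.exp (-p * Real.log (a • x + b • y).1 + q * (a • x + b • y).2.1
      - r * Real.log (a • x + b • y).2.2.2.2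
      + s * ((a • x + b • y).2.2.1 * invSqrt (a • x + b • y).2.2.2.1
        * (a • x + b • y).2.2.1ᵀ).trace)
      ≤ C * (a * Real.exp gx + b * Real.exp gy) :=
        mul_le_mul_of_nonneg_left h3 hC.le
    _ = a * (C * Real.exp gx) + b * (C * Real.exp gy) := by ring
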